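/- Let $\alpha \in (0,1)$ and let $\tau$ be a renewal process on $\mathbb{N}$ with $\tau_0 = 0$ such that for some constant $A > 0$ and some $\alpha' \in (0,\alpha)$, $\mathbb{P}(n \in \tau) \leq A n^{\alpha'-1}$ for all $n \geq 1$ (after scaling). Then for $h_N = \hat{h} N^{-\alpha'}$ with $\hat h > 0$, $\sup_N \mathbb{E}\big[\exp\big(h_N \sum_{n=1}^N \mathbf{1}_{\{n\in\tau\}}\big)\big] < \infty$. -/

import Mathlib

open MeasureTheory Finset


lemma term_bd {p : ℝ} (hp0 : 0 < p) (hp1 : p < 1) {g : ℕ} (hg : 1 ≤ g) :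
    p * (g:ℝ) ^ (p-1) ≤ (g:ℝ) ^ p - ((g:ℝ) - 1) ^ p := by
  have hgpos : (0:ℝ) < g := by exact_mod_cast hg
  have hs : (-1:ℝ) ≤ -1/g := by
    rw [neg_div]
    have : 1/(g:ℝ) ≤ 1 := by
      rw [div_le_one hgpos]; exact_mod_cast hg
    linarith
  have h := rpow_one_add_le_one_add_mul_self hs hp0.le hp1.le
  -- (1 + (-1/g))^p ≤ 1 + p * (-1/g)
  have hb : (0:ℝ) ≤ 1 + (-1/g) := by
    have : 1/(g:ℝ) ≤ 1 := by rw [div_le_one hgpos]; exact_mod_cast hg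
    rw [neg_div]; linarith
  have hmul := mul_le_mul_of_nonneg_left h (le_of_lt (Real.rpow_pos_of_pos hgpos p))
  have key : ((g:ℝ)-1) ^ p ≤ (g:ℝ)^p * (1 + p * (-1/g)) := by
    calc ((g:ℝ)-1) ^ p = ((g:ℝ) * (1 + (-1/g))) ^ p := by
          congr 1; field_simp; ring
      _ = (g:ℝ)^p * (1 + (-1/g))^p := Real.mul_rpow hgpos.le hb
      _ ≤ (g:ℝ)^p * (1 + p * (-1/g)) := hmul
  have hexp : (g:ℝ)^p * (p * (1/g)) = p * (g:ℝ)^(p-1) := by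
    rw [Real.rpow_sub hgpos, Real.rpow_one]; ring
  have hre : (g:ℝ)^p * (1 + p * (-1/g)) = (g:ℝ)^p - p * (g:ℝ)^(p-1) := by
    rw [← hexp]; ring
  linarith [key, hre]

lemma sum_rpow_bd {p : ℝ} (hp0 : 0 < p) (hp1 : p < 1) (M : ℕ) :
    ∑ g ∈ Icc 1 M, (g:ℝ) ^ (p-1) ≤ (M:ℝ) ^ p / p := by
  have key : ∑ g ∈ Icc 1 M, p * (g:ℝ) ^ (p-1) ≤ (M:ℝ)^p := by
    calc ∑ g ∈ Icc 1 M, p * (g:ℝ) ^ (p-1)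
        ≤ ∑ g ∈ Icc 1 M, ((g:ℝ)^p - ((g:ℝ)-1)^p) := by
          apply Finset.sum_le_sum
          intro g hg
          exact term_bd hp0 hp1 (mem_Icc.mp hg).1
      _ = ∑ i ∈ range M, (((i+1:ℕ):ℝ)^p - (((i:ℕ)):ℝ)^p) := by
          rw [range_eq_Ico]
          rw [Finset.sum_Ico_eq_sum_range]
          simp only [Nat.sub_zero]
          rw [show Icc 1 M = Ico 1 (M+1) by rfl, Finset.sum_Ico_eq_sum_range]
          apply Finset.sum_congr (by simp)
          intro i _
          push_cast
          ring_nf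
      _ = ((M:ℕ):ℝ)^p - ((0:ℕ):ℝ)^p := Finset.sum_range_sub (fun n => ((n:ℝ))^p) M
      _ ≤ (M:ℝ)^p := by
          simp [Real.zero_rpow (ne_of_gt hp0)]
  rw [← Finset.mul_sum] at key
  rw [le_div_iff₀ hp0]
  linarith [key]

private lemma W_bd' {p : ℝ} (hp0 : 0 < p) (hp1 : p < 1) (k N : ℕ) (hk : 1 ≤ k) (hN : 1 ≤ N) :
    ∑ g ∈ (Fintype.piFinset fun _ : Fin k => Icc 1 N).filter (fun g => ∑ i, g i ≤ N),
        ∏ i, ((g i : ℝ)) ^ (p-1)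
      ≤ 2^k * (1/p)^k * (N:ℝ)^(p*k) * 2^p * (2/(k:ℝ))^(p*k/2) := by
  classical
  have hk0 : (0:ℝ) < k := by exact_mod_cast hk
  set t' : ℕ := min (2*N/k) N with ht'
  set S : ℕ → ℝ := fun M => ∑ g ∈ Icc 1 M, (g:ℝ) ^ (p-1) with hS
  have hS0 : ∀ M, 0 ≤ S M := fun M =>
    Finset.sum_nonneg fun g _ => Real.rpow_nonneg (Nat.cast_nonneg g) _
  set 𝒥 : Finset (Finset (Fin k)) := univ.filter (fun J => k ≤ 2*J.card) with h𝒥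
  set Box : Finset (Fin k) → Finset (Fin k → ℕ) :=
    fun J => Fintype.piFinset (fun i => if i ∈ J then Icc 1 t' else Icc 1 N) with hBox
  set F : (Fin k → ℕ) → ℝ := fun g => ∏ i, ((g i : ℝ)) ^ (p-1) with hF
  have hF0 : ∀ g, 0 ≤ F g := fun g =>
    Finset.prod_nonneg fun i _ => Real.rpow_nonneg (Nat.cast_nonneg _) _
  set W : Finset (Fin k → ℕ) :=
    (Fintype.piFinset fun _ : Fin k => Icc 1 N).filter (fun g => ∑ i, g i ≤ N) with hW
  set Jmap : (Fin k → ℕ) → Finset (Fin k) := fun g => univ.filter (fun i => g i ≤ t') with hJ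
  -- counting claim
  have hmaps : ∀ g ∈ W, Jmap g ∈ 𝒥 := by
    intro g hg
    rw [hW, mem_filter, Fintype.mem_piFinset] at hg
    obtain ⟨hmem, hsum⟩ := hg
    simp only [h𝒥, mem_filter, mem_univ, true_and]
    by_cases hcase : 2*N/k ≥ N
    · -- t' = N, so Jmap g = univ
      have : Jmap g = univ := by
        apply Finset.eq_univ_of_forall
        intro i
        simp only [hJ, mem_filter, mem_univ, true_and, ht']
        exact le_trans (mem_Icc.mp (hmem i)).2 (le_min hcase le_rfl)
      rw [this, Finset.card_univ, Fintype.card_fin]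
      omega
    · push_neg at hcase
      have ht'eq : t' = 2*N/k := by rw [ht']; omega
      by_contra hcon
      push_neg at hcon
      -- complement
      set Jc := (Jmap g)ᶜ with hJc
      have hcardc : (Jmap g).card + Jc.card = k := by
        rw [hJc]
        have := Finset.card_compl (Jmap g)
        rw [this, Fintype.card_fin]
        have : (Jmap g).card ≤ k := le_trans (Finset.card_le_card (subset_univ _)) (by simp)
        omega
      have hlow : ∀ i ∈ Jc, t' + 1 ≤ g i := by
        intro i hi
        rw [hJc, Finset.mem_compl, hJ, mem_filter] at hi
        push_neg at hi
        have := hi (mem_univ i)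
        omega
      have h1 : Jc.card * (t' + 1) ≤ ∑ i ∈ Jc, g i := by
        calc Jc.card * (t'+1) = ∑ _i ∈ Jc, (t'+1) := by rw [Finset.sum_const, smul_eq_mul]
          _ ≤ ∑ i ∈ Jc, g i := Finset.sum_le_sum hlow
      have h2 : ∑ i ∈ Jc, g i ≤ N :=
        le_trans (Finset.sum_le_sum_of_subset (subset_univ _)) hsum
      have h3 : 2*N < k * (t' + 1) := by
        have hd := Nat.div_add_mod (2*N) k
        have hm := Nat.mod_lt (2*N) (show 0 < k from hk)
        have hx : k*(2*N/k+1) = k*(2*N/k) + k := by ring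
        rw [ht'eq]; omega
      -- 2*Jc.card ≥ k+1
      have h4 : k + 1 ≤ 2 * Jc.card := by omega
      have h5 : k * (t'+1) ≤ (2*Jc.card) * (t'+1) := Nat.mul_le_mul_right _ (by omega)
      have h6 : (2*Jc.card) * (t'+1) = 2 * (Jc.card * (t'+1)) := by ring
      omega
  have hfiber : ∀ J ∈ 𝒥, ∀ g ∈ W.filter (fun g => Jmap g = J), g ∈ Box J := by
    intro J _ g hg
    rw [mem_filter] at hg
    obtain ⟨hgW, hgJ⟩ := hg
    rw [hW, mem_filter, Fintype.mem_piFinset] at hgW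
    rw [hBox, Fintype.mem_piFinset]
    intro i
    by_cases hi : i ∈ J
    · simp only [hi, if_true, mem_Icc]
      refine ⟨(mem_Icc.mp (hgW.1 i)).1, ?_⟩
      rw [← hgJ, hJ, mem_filter] at hi
      exact hi.2
    · simp only [hi, if_false]
      exact hgW.1 i
  -- step 1
  have step1 : ∑ g ∈ W, F g ≤ ∑ J ∈ 𝒥, ∑ g ∈ Box J, F g := by
    rw [← Finset.sum_fiberwise_of_maps_to hmaps F]
    apply Finset.sum_le_sum
    intro J hJ'
    apply Finset.sum_le_sum_of_subset_of_nonneg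
    · intro g hg; exact hfiber J hJ' g hg
    · intro g _ _; exact hF0 g
  -- step 2 : each box sum factorizes
  have step2 : ∀ J : Finset (Fin k), ∑ g ∈ Box J, F g = S t' ^ J.card * S N ^ (k - J.card) := by
    intro J
    rw [hBox, hF]
    rw [← Finset.prod_univ_sum (fun i => if i ∈ J then Icc 1 t' else Icc 1 N)
      (fun _ j => ((j:ℝ))^(p-1))]
    have h1 : ∀ i : Fin k, (∑ j ∈ (if i ∈ J then Icc 1 t' else Icc 1 N), ((j:ℝ))^(p-1))
        = (if i ∈ J then S t' else S N) := by
      intro i; by_cases hi : i ∈ J <;> simp [hi, hS]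
    rw [Finset.prod_congr rfl (fun i _ => h1 i), Finset.prod_ite, Finset.prod_const,
      Finset.prod_const]
    congr 1
    · congr 1
      simp [Finset.filter_mem_eq_inter]
    · congr 1
      have : univ.filter (fun i => ¬ i ∈ J) = Jᶜ := by
        ext i; simp
      rw [this, Finset.card_compl, Fintype.card_fin]
  -- step 3 : bound each J-term
  have hc0 : (0:ℝ) < 2/(k:ℝ) := by positivity
  have hb : S N ≤ (N:ℝ)^p / p := sum_rpow_bd hp0 hp1 N
  have hta : ((t':ℝ)) ≤ 2*(N:ℝ)/(k:ℝ) := by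
    calc ((t':ℝ)) ≤ ((2*N/k : ℕ):ℝ) := by exact_mod_cast Nat.cast_le.mpr (min_le_left _ _)
      _ ≤ ((2*N : ℕ):ℝ)/(k:ℝ) := Nat.cast_div_le
      _ = 2*(N:ℝ)/(k:ℝ) := by push_cast; ring
  have ha : S t' ≤ (2*(N:ℝ)/(k:ℝ))^p / p := by
    calc S t' ≤ (t':ℝ)^p / p := sum_rpow_bd hp0 hp1 t'
      _ ≤ (2*(N:ℝ)/(k:ℝ))^p / p := by
          have := Real.rpow_le_rpow (Nat.cast_nonneg t') hta hp0.le
          exact div_le_div_of_nonneg_right this hp0.le |>.trans_eq rfl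
  have hmul : (2*(N:ℝ)/(k:ℝ))^p = (N:ℝ)^p * (2/(k:ℝ))^p := by
    rw [← Real.mul_rpow (Nat.cast_nonneg N) hc0.le]
    congr 1; ring
  have hstep3 : ∀ J ∈ 𝒥, S t' ^ J.card * S N ^ (k - J.card)
      ≤ (1/p)^k * (N:ℝ)^(p*k) * 2^p * (2/(k:ℝ))^(p*k/2) := by
    intro J hJmem
    rw [h𝒥, mem_filter] at hJmem
    have hjk : J.card ≤ k := by
      have := Finset.card_le_card (Finset.subset_univ J)
      simpa using this
    have hkj : k ≤ 2 * J.card := hJmem.2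
    set j := J.card with hj
    have e1 : S t' ^ j * S N ^ (k - j) ≤ ((2*(N:ℝ)/(k:ℝ))^p / p) ^ j * ((N:ℝ)^p / p) ^ (k-j) := by
      apply mul_le_mul
      · exact pow_le_pow_left₀ (hS0 t') ha j
      · exact pow_le_pow_left₀ (hS0 N) hb (k-j)
      · exact pow_nonneg (hS0 N) _
      · positivity
    have hjk' : j + (k - j) = k := by omega
    have e2 : ((2*(N:ℝ)/(k:ℝ))^p / p) ^ j * ((N:ℝ)^p / p) ^ (k-j)
        = (1/p)^k * ((N:ℝ)^p)^k * ((2/(k:ℝ))^p)^j := by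
      rw [hmul, div_pow, div_pow, mul_pow,
        show (1/p)^k = (1/p)^j * (1/p)^(k-j) by rw [← pow_add, hjk'],
        show ((N:ℝ)^p)^k = ((N:ℝ)^p)^j * ((N:ℝ)^p)^(k-j) by rw [← pow_add, hjk']]
      have hpne : p ≠ 0 := hp0.ne'
      field_simp
      rw [one_div, inv_pow, inv_pow, mul_assoc (p^j * p^(k-j)), ← mul_inv, mul_inv_cancel₀ (by positivity)]
    have e3 : ((N:ℝ)^p)^k = (N:ℝ)^(p*k) := by
      rw [← Real.rpow_natCast ((N:ℝ)^p) k, ← Real.rpow_mul (Nat.cast_nonneg N)]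
    have e4 : ((2/(k:ℝ))^p)^j ≤ 2^p * (2/(k:ℝ))^(p*k/2) := by
      have hj2 : ((2/(k:ℝ))^p)^j = (2/(k:ℝ))^(p*j) := by
        rw [← Real.rpow_natCast ((2/(k:ℝ))^p) j, ← Real.rpow_mul hc0.le]
      rcases Nat.lt_or_ge k 2 with hk2 | hk2
      · -- k = 1, j = 1
        have hk1 : k = 1 := by omega
        have hj1 : j = 1 := by omega
        rw [hk1, hj1]
        simp only [Nat.cast_one, div_one, pow_one]
        have h2p : (1:ℝ) ≤ 2^(p*1/2) := Real.one_le_rpow (by norm_num) (by positivity)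
        nlinarith [Real.rpow_pos_of_pos (show (0:ℝ)<2 by norm_num) p]
      · have hle1 : 2/(k:ℝ) ≤ 1 := by
          rw [div_le_one hk0]; exact_mod_cast hk2
        have hexp : p*k/2 ≤ p*j := by
          have : (k:ℝ) ≤ 2*j := by exact_mod_cast hkj
          nlinarith
        have := Real.rpow_le_rpow_of_exponent_ge hc0 hle1 hexp
        rw [hj2]
        have h2p : (1:ℝ) ≤ 2^p := Real.one_le_rpow (by norm_num) hp0.le
        nlinarith [Real.rpow_nonneg hc0.le (p*k/2)]
    calc S t' ^ j * S N ^ (k - j) ≤ (1/p)^k * ((N:ℝ)^p)^k * ((2/(k:ℝ))^p)^j := by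
          rw [← e2]; exact e1
      _ ≤ (1/p)^k * ((N:ℝ)^p)^k * (2^p * (2/(k:ℝ))^(p*k/2)) := by
          apply mul_le_mul_of_nonneg_left e4; positivity
      _ = (1/p)^k * (N:ℝ)^(p*k) * 2^p * (2/(k:ℝ))^(p*k/2) := by rw [e3]; ring
  have hcard : (𝒥.card : ℝ) ≤ 2^k := by
    have h1 : 𝒥.card ≤ (univ : Finset (Finset (Fin k))).card := Finset.card_filter_le _ _
    have h2 : (univ : Finset (Finset (Fin k))).card = 2^k := by
      rw [Finset.card_univ, Fintype.card_finset, Fintype.card_fin]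
    calc (𝒥.card : ℝ) ≤ ((2^k : ℕ):ℝ) := by exact_mod_cast h1.trans_eq h2
      _ = 2^k := by push_cast; ring
  calc ∑ g ∈ W, F g ≤ ∑ J ∈ 𝒥, ∑ g ∈ Box J, F g := step1
    _ = ∑ J ∈ 𝒥, S t' ^ J.card * S N ^ (k - J.card) := Finset.sum_congr rfl (fun J _ => step2 J)
    _ ≤ ∑ _J ∈ 𝒥, (1/p)^k * (N:ℝ)^(p*k) * 2^p * (2/(k:ℝ))^(p*k/2) := Finset.sum_le_sum hstep3
    _ = (𝒥.card : ℝ) * ((1/p)^k * (N:ℝ)^(p*k) * 2^p * (2/(k:ℝ))^(p*k/2)) := by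
        rw [Finset.sum_const, nsmul_eq_mul]
    _ ≤ 2^k * ((1/p)^k * (N:ℝ)^(p*k) * 2^p * (2/(k:ℝ))^(p*k/2)) := by
        apply mul_le_mul_of_nonneg_right hcard; positivity
    _ = 2^k * (1/p)^k * (N:ℝ)^(p*k) * 2^p * (2/(k:ℝ))^(p*k/2) := by ring


def gapv {k : ℕ} (n : Fin k → ℕ) : Fin k → ℕ :=
  fun i => n i - (if (i:ℕ) = 0 then 0 else
    n ⟨(i:ℕ) - 1, lt_of_le_of_lt (Nat.sub_le _ _) i.isLt⟩)

lemma gapv_pos {k : ℕ} {n : Fin k → ℕ} (hmono : StrictMono n) (hpos : ∀ i, 0 < n i) (i : Fin k) :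
    1 ≤ gapv n i := by
  unfold gapv
  by_cases h : (i:ℕ) = 0
  · simp only [h, if_pos]
    have := hpos i; omega
  · simp only [h, if_neg, if_false]
    have hlt : (⟨(i:ℕ)-1, lt_of_le_of_lt (Nat.sub_le _ _) i.isLt⟩ : Fin k) < i := by
      rw [Fin.lt_def]; simp; omega
    have := hmono hlt
    omega

lemma gapv_partial {k : ℕ} {n : Fin k → ℕ} (hmono : StrictMono n) :
    ∀ m : ℕ, ∀ hm : m < k,
      (∑ j ∈ univ.filter (fun j : Fin k => (j:ℕ) ≤ m), gapv n j) = n ⟨m, hm⟩ := by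
  intro m
  induction m with
  | zero =>
    intro hm
    have : univ.filter (fun j : Fin k => (j:ℕ) ≤ 0) = {⟨0, hm⟩} := by
      ext j; simp [Fin.ext_iff, Nat.le_zero]
    rw [this, Finset.sum_singleton]
    unfold gapv
    simp
  | succ m ih =>
    intro hm
    have hm' : m < k := by omega
    have hsplit : univ.filter (fun j : Fin k => (j:ℕ) ≤ m+1)
        = insert ⟨m+1, hm⟩ (univ.filter (fun j : Fin k => (j:ℕ) ≤ m)) := by
      ext j
      simp only [mem_filter, mem_univ, true_and, mem_insert, Fin.ext_iff]
      omega
    have hnot : (⟨m+1, hm⟩ : Fin k) ∉ univ.filter (fun j : Fin k => (j:ℕ) ≤ m) := by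
      simp
    rw [hsplit, Finset.sum_insert hnot, ih hm']
    have hlt : (⟨m, hm'⟩ : Fin k) < ⟨m+1, hm⟩ := by rw [Fin.lt_def]; simp
    have hle := le_of_lt (hmono hlt)
    unfold gapv
    simp only [Nat.succ_ne_zero, if_false]
    have : (⟨m+1-1, lt_of_le_of_lt (Nat.sub_le _ _) (⟨m+1,hm⟩ : Fin k).isLt⟩ : Fin k)
        = ⟨m, hm'⟩ := by simp
    rw [this]
    omega

lemma gapv_sum {k : ℕ} {n : Fin k → ℕ} (hmono : StrictMono n) (hk : 0 < k) :
    ∑ i, gapv n i = n ⟨k-1, by omega⟩ := by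
  have := gapv_partial hmono (k-1) (by omega)
  rw [← this]
  congr 1
  ext j
  simp only [mem_filter, mem_univ, true_and, iff_true]
  have hj := j.isLt
  exact ⟨fun _ => Nat.le_sub_one_of_lt hj, fun _ => trivial⟩

lemma gapv_inj {k : ℕ} {n n' : Fin k → ℕ} (hmono : StrictMono n) (hmono' : StrictMono n')
    (h : gapv n = gapv n') : n = n' := by
  funext i
  have h1 := gapv_partial hmono (i:ℕ) i.isLt
  have h2 := gapv_partial hmono' (i:ℕ) i.isLt
  rw [h] at h1
  rw [Fin.eta] at h1 h2
  rw [← h1, ← h2]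

private lemma exp_sub_one_le {h : ℝ} (hh : 0 ≤ h) : Real.exp h - 1 ≤ h * Real.exp h := by
  have h1 := Real.add_one_le_exp (-h)
  have h2 : Real.exp h * (1 - h) ≤ Real.exp h * Real.exp (-h) := by
    apply mul_le_mul_of_nonneg_left _ (Real.exp_pos h).le
    linarith
  rw [← Real.exp_add] at h2
  simp only [add_neg_cancel, Real.exp_zero] at h2
  nlinarith

private lemma geom_bd (s : Finset ℕ) : ∑ k ∈ s, ((1:ℝ)/2)^k ≤ 2 := by
  obtain ⟨n, hn⟩ := s.exists_nat_subset_range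
  calc ∑ k ∈ s, ((1:ℝ)/2)^k ≤ ∑ k ∈ range n, ((1:ℝ)/2)^k :=
        Finset.sum_le_sum_of_subset_of_nonneg hn (fun k _ _ => by positivity)
    _ ≤ 2 := by
        have := sum_geometric_two_le n
        simpa [one_div] using this

set_option maxHeartbeats 2000000 in
theorem stmt_19 {Ω : Type*} [MeasurableSpace Ω] (μ : Measure Ω) [IsProbabilityMeasure μ]
    (T : Ω → Set ℕ) (hmeas : ∀ n : ℕ, MeasurableSet {x | n ∈ T x})
    (α α' A hhat : ℝ) (hα : α ∈ Set.Ioo (0 : ℝ) 1) (hα' : 0 < α') (hα'α : α' < α)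
    (hA : 0 < A) (hh : 0 < hhat)
    (hrenew : ∀ (k : ℕ) (n : Fin k → ℕ), StrictMono n → (∀ i, 0 < n i) →
      μ {x | ∀ i, n i ∈ T x} =
        ∏ i : Fin k,
          μ {x | (n i - (if (i : ℕ) = 0 then 0 else
              n ⟨(i : ℕ) - 1, lt_of_le_of_lt (Nat.sub_le _ _) i.isLt⟩)) ∈ T x})
    (hbound : ∀ n : ℕ, 1 ≤ n →
      μ {x | n ∈ T x} ≤ ENNReal.ofReal (A * (n : ℝ) ^ (α' - 1))) :
    ∃ M : ℝ, ∀ N : ℕ, 1 ≤ N →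
      (∫ x, Real.exp ((hhat * (N : ℝ) ^ (-α')) *
          ∑ n ∈ Icc 1 N, Set.indicator (T x) (fun _ => (1 : ℝ)) n) ∂μ) ≤ M := by
  classical
  have hα1 : α' < 1 := hα'α.trans hα.2
  set E : ℝ := 2 * (hhat * Real.exp hhat) * A / α' with hE
  have hE0 : 0 < E := by positivity
  set E' : ℝ := max E 1 with hE'
  have hE'1 : 1 ≤ E' := le_max_right _ _
  have hE'0 : 0 < E' := lt_of_lt_of_le one_pos hE'1
  set K : ℕ := ⌈(2:ℝ) * (2*E')^((2:ℝ)/α')⌉₊ + 1 with hK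
  set u : ℕ → ℝ := fun k => E^k * (2/(k:ℝ))^(α'*k/2) with hu
  have hu0 : ∀ k, 0 ≤ u k := fun k =>
    mul_nonneg (pow_nonneg hE0.le k) (Real.rpow_nonneg (by positivity) _)
  -- tail bound
  have htail : ∀ k : ℕ, K ≤ k → u k ≤ (1/2)^k := by
    intro k hkK
    have hk1 : 1 ≤ k := le_trans (by omega) hkK
    have hk0 : (0:ℝ) < k := by exact_mod_cast hk1
    set y : ℝ := (2*E')^((2:ℝ)/α') with hy
    have hy0 : 0 < y := Real.rpow_pos_of_pos (by positivity) _
    have hkbig : (2:ℝ) * y ≤ k := by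
      calc (2:ℝ) * y ≤ (⌈(2:ℝ) * y⌉₊ : ℝ) := Nat.le_ceil _
        _ ≤ (k:ℝ) := by exact_mod_cast le_trans (by omega) hkK
    have hfrac : 2/(k:ℝ) ≤ 1/y := by
      rw [div_le_div_iff₀ hk0 hy0]; linarith
    have hfr0 : (0:ℝ) ≤ 2/(k:ℝ) := by positivity
    have hkey : (2/(k:ℝ))^(α'/2) ≤ (2*E')⁻¹ := by
      have step1 : (2/(k:ℝ))^(α'/2) ≤ (1/y)^(α'/2) :=
        Real.rpow_le_rpow hfr0 hfrac (by positivity)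
      have hx : (0:ℝ) < 2*E' := by positivity
      have step2 : ((1:ℝ)/y)^(α'/2) = (2*E')⁻¹ := by
        rw [hy, one_div, ← Real.rpow_neg hx.le, ← Real.rpow_mul hx.le]
        rw [show -((2:ℝ)/α') * (α'/2) = -1 by field_simp]
        exact Real.rpow_neg_one _
      rw [step2] at step1; exact step1
    have hhalf : E * (2/(k:ℝ))^(α'/2) ≤ 1/2 := by
      have h1 : E * (2/(k:ℝ))^(α'/2) ≤ E' * (2*E')⁻¹ :=
        mul_le_mul (le_max_left E 1) hkey (Real.rpow_nonneg hfr0 _) hE'0.le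
      have h2 : E' * (2*E')⁻¹ = 1/2 := by field_simp
      linarith
    have hexpand : u k = (E * (2/(k:ℝ))^(α'/2))^k := by
      rw [hu]
      rw [mul_pow]
      congr 1
      rw [← Real.rpow_natCast ((2/(k:ℝ))^(α'/2)) k, ← Real.rpow_mul hfr0]
      congr 1
      ring
    rw [hexpand]
    exact pow_le_pow_left₀ (by positivity) hhalf k
  -- the uniform constant
  refine ⟨1 + 2^α' * ((∑ k ∈ range K, u k) + 2), ?_⟩
  intro N hN
  have hN0 : (0:ℝ) < N := by exact_mod_cast hN
  set h : ℝ := hhat * (N:ℝ)^(-α') with hhdef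
  have hh0 : 0 ≤ h := by positivity
  set c : ℝ := Real.exp h - 1 with hc
  have hc0 : 0 ≤ c := by
    have := Real.one_le_exp hh0
    simp [hc]; linarith
  have hcle : c ≤ hhat * Real.exp hhat * (N:ℝ)^(-α') := by
    have h1 : c ≤ h * Real.exp h := exp_sub_one_le hh0
    have hhle : h ≤ hhat := by
      rw [hhdef]
      have : (N:ℝ)^(-α') ≤ 1 := by
        apply Real.rpow_le_one_of_one_le_of_nonpos (by exact_mod_cast hN) (by linarith)
      nlinarith
    have h2 : Real.exp h ≤ Real.exp hhat := Real.exp_le_exp.mpr hhle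
    calc c ≤ h * Real.exp h := h1
      _ ≤ h * Real.exp hhat := by nlinarith [Real.exp_pos h]
      _ = hhat * Real.exp hhat * (N:ℝ)^(-α') := by rw [hhdef]; ring
  -- measurability of the subset events
  have hmeasI : ∀ I : Finset ℕ, MeasurableSet {y | ∀ m ∈ I, m ∈ T y} := by
    intro I
    have heq : {y | ∀ m ∈ I, m ∈ T y} = ⋂ m ∈ (I : Set ℕ), {y | m ∈ T y} := by
      ext y; simp
    rw [heq]
    exact MeasurableSet.biInter (I : Set ℕ).to_countable (fun m _ => hmeas m)
  -- pointwise expansion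
  have pointwise : ∀ x, Real.exp (h * ∑ n ∈ Icc 1 N, Set.indicator (T x) (fun _ => (1:ℝ)) n)
      = ∑ I ∈ (Icc 1 N).powerset,
          c^I.card * Set.indicator {y | ∀ m ∈ I, m ∈ T y} (fun _ => (1:ℝ)) x := by
    intro x
    rw [Finset.mul_sum, Real.exp_sum]
    have hfac : ∀ n ∈ Icc 1 N, Real.exp (h * Set.indicator (T x) (fun _ => (1:ℝ)) n)
        = c * Set.indicator (T x) (fun _ => (1:ℝ)) n + 1 := by
      intro n _
      by_cases hn : n ∈ T x
      · rw [Set.indicator_of_mem hn]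
        simp [hc]
      · rw [Set.indicator_of_notMem hn]
        simp
    rw [Finset.prod_congr rfl hfac, Finset.prod_add]
    apply Finset.sum_congr rfl
    intro I _
    rw [Finset.prod_const_one, mul_one, Finset.prod_mul_distrib, Finset.prod_const]
    congr 1
    by_cases hall : ∀ m ∈ I, m ∈ T x
    · have hx : x ∈ {y | ∀ m ∈ I, m ∈ T y} := hall
      rw [Set.indicator_of_mem hx]
      exact Finset.prod_eq_one (fun n hn => Set.indicator_of_mem (hall n hn) _)
    · have hx : x ∉ {y | ∀ m ∈ I, m ∈ T y} := hall
      rw [Set.indicator_of_notMem hx]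
      push_neg at hall
      obtain ⟨m, hmI, hm⟩ := hall
      exact Finset.prod_eq_zero hmI (Set.indicator_of_notMem hm _)
  -- integrate
  have hint : ∀ I : Finset ℕ, Integrable
      (fun x => c^I.card * Set.indicator {y | ∀ m ∈ I, m ∈ T y} (fun _ => (1:ℝ)) x) μ := by
    intro I
    apply Integrable.const_mul
    rw [integrable_indicator_iff (hmeasI I)]
    exact integrableOn_const (measure_ne_top μ _)
  have hInt : (∫ x, Real.exp (h * ∑ n ∈ Icc 1 N, Set.indicator (T x) (fun _ => (1:ℝ)) n) ∂μ)
      = ∑ I ∈ (Icc 1 N).powerset, c^I.card * (μ {y | ∀ m ∈ I, m ∈ T y}).toReal := by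
    rw [integral_congr_ae (Filter.Eventually.of_forall pointwise)]
    rw [integral_finset_sum _ (fun I _ => hint I)]
    apply Finset.sum_congr rfl
    intro I _
    rw [MeasureTheory.integral_const_mul]
    have hone : (∫ x, Set.indicator {y | ∀ m ∈ I, m ∈ T y} (fun _ => (1:ℝ)) x ∂μ)
        = (μ {y | ∀ m ∈ I, m ∈ T y}).toReal := MeasureTheory.integral_indicator_one (hmeasI I)
    rw [hone]
  -- per-cardinality chain bound
  have chain : ∀ k : ℕ, 1 ≤ k →
      ∑ I ∈ powersetCard k (Icc 1 N), (μ {y | ∀ m ∈ I, m ∈ T y}).toReal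
        ≤ A^k * ∑ g ∈ (Fintype.piFinset fun _ : Fin k => Icc 1 N).filter
            (fun g => ∑ i, g i ≤ N), ∏ i, ((g i : ℝ)) ^ (α'-1) := by
    intro k hk
    set f : Finset ℕ → (Fin k → ℕ) := fun I =>
      if hcard : I.card = k then gapv (fun i => I.orderEmbOfFin hcard i) else fun _ => 0
      with hf
    have main_bd : ∀ I ∈ powersetCard k (Icc 1 N),
        (μ {y | ∀ m ∈ I, m ∈ T y}).toReal ≤ ∏ i, (A * ((f I i : ℝ)) ^ (α'-1)) := by
      intro I hI
      rw [Finset.mem_powersetCard] at hI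
      obtain ⟨hsub, hcard⟩ := hI
      set n : Fin k → ℕ := fun i => I.orderEmbOfFin hcard i with hn
      have hmono : StrictMono n := (I.orderEmbOfFin hcard).strictMono
      have hposn : ∀ i, 0 < n i := by
        intro i
        have := hsub (Finset.orderEmbOfFin_mem I hcard i)
        exact (mem_Icc.mp this).1
      have hseteq : {y | ∀ m ∈ I, m ∈ T y} = {y | ∀ i, n i ∈ T y} := by
        ext y
        constructor
        · intro hy i; exact hy _ (Finset.orderEmbOfFin_mem I hcard i)
        · intro hy m hm
          have : m ∈ Set.range n := by
            rw [hn]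
            rw [show Set.range (fun i => (I.orderEmbOfFin hcard) i)
              = Set.range (I.orderEmbOfFin hcard) from rfl]
            rw [Finset.range_orderEmbOfFin]
            exact_mod_cast hm
          obtain ⟨i, hi⟩ := this
          rw [← hi]; exact hy i
      have hfI : f I = gapv n := by rw [hf]; simp [hcard, hn]
      rw [hseteq]
      have hren := hrenew k n hmono hposn
      have hprod : μ {y | ∀ i, n i ∈ T y} ≤ ENNReal.ofReal (∏ i, (A * ((gapv n i : ℝ))^(α'-1))) := by
        rw [hren]
        have hterm : ∀ i : Fin k,
            μ {x | (n i - (if (i : ℕ) = 0 then 0 else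
              n ⟨(i : ℕ) - 1, lt_of_le_of_lt (Nat.sub_le _ _) i.isLt⟩)) ∈ T x}
            ≤ ENNReal.ofReal (A * ((gapv n i : ℝ))^(α'-1)) := by
          intro i
          have : (n i - (if (i : ℕ) = 0 then 0 else
              n ⟨(i : ℕ) - 1, lt_of_le_of_lt (Nat.sub_le _ _) i.isLt⟩)) = gapv n i := rfl
          rw [this]
          exact hbound _ (gapv_pos hmono hposn i)
        calc ∏ i, μ {x | (n i - (if (i : ℕ) = 0 then 0 else
              n ⟨(i : ℕ) - 1, lt_of_le_of_lt (Nat.sub_le _ _) i.isLt⟩)) ∈ T x}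
            ≤ ∏ i, ENNReal.ofReal (A * ((gapv n i : ℝ))^(α'-1)) :=
              Finset.prod_le_prod' (fun i _ => hterm i)
          _ = ENNReal.ofReal (∏ i, (A * ((gapv n i : ℝ))^(α'-1))) := by
              rw [← ENNReal.ofReal_prod_of_nonneg]
              intro i _
              exact mul_nonneg hA.le (Real.rpow_nonneg (Nat.cast_nonneg _) _)
      rw [hfI]
      apply ENNReal.toReal_le_of_le_ofReal
      · exact Finset.prod_nonneg (fun i _ =>
          mul_nonneg hA.le (Real.rpow_nonneg (Nat.cast_nonneg _) _))
      · exact hprod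
    have hmem_img : ∀ I ∈ powersetCard k (Icc 1 N),
        f I ∈ (Fintype.piFinset fun _ : Fin k => Icc 1 N).filter (fun g => ∑ i, g i ≤ N) := by
      intro I hI
      rw [Finset.mem_powersetCard] at hI
      obtain ⟨hsub, hcard⟩ := hI
      set n : Fin k → ℕ := fun i => I.orderEmbOfFin hcard i with hn
      have hmono : StrictMono n := (I.orderEmbOfFin hcard).strictMono
      have hposn : ∀ i, 0 < n i := fun i =>
        (mem_Icc.mp (hsub (Finset.orderEmbOfFin_mem I hcard i))).1
      have hfI : f I = gapv n := by rw [hf]; simp [hcard, hn]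
      rw [hfI, mem_filter, Fintype.mem_piFinset]
      constructor
      · intro i
        rw [mem_Icc]
        refine ⟨gapv_pos hmono hposn i, ?_⟩
        have h1 : gapv n i ≤ n i := Nat.sub_le _ _
        have h2 : n i ≤ N := (mem_Icc.mp (hsub (Finset.orderEmbOfFin_mem I hcard i))).2
        omega
      · rw [gapv_sum hmono (by omega)]
        exact (mem_Icc.mp (hsub (Finset.orderEmbOfFin_mem I hcard _))).2
    have hinj : ∀ I ∈ powersetCard k (Icc 1 N), ∀ I' ∈ powersetCard k (Icc 1 N),
        f I = f I' → I = I' := by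
      intro I hI I' hI' hff
      rw [Finset.mem_powersetCard] at hI hI'
      obtain ⟨_, hcard⟩ := hI
      obtain ⟨_, hcard'⟩ := hI'
      have h1 : f I = gapv (fun i => I.orderEmbOfFin hcard i) := by rw [hf]; simp [hcard]
      have h2 : f I' = gapv (fun i => I'.orderEmbOfFin hcard' i) := by rw [hf]; simp [hcard']
      rw [h1, h2] at hff
      have := gapv_inj (I.orderEmbOfFin hcard).strictMono (I'.orderEmbOfFin hcard').strictMono hff
      apply Finset.coe_injective
      rw [← Finset.range_orderEmbOfFin I hcard, ← Finset.range_orderEmbOfFin I' hcard']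
      exact congrArg Set.range this
    calc ∑ I ∈ powersetCard k (Icc 1 N), (μ {y | ∀ m ∈ I, m ∈ T y}).toReal
        ≤ ∑ I ∈ powersetCard k (Icc 1 N), ∏ i, (A * ((f I i : ℝ)) ^ (α'-1)) :=
          Finset.sum_le_sum main_bd
      _ = ∑ v ∈ (powersetCard k (Icc 1 N)).image f, ∏ i, (A * ((v i : ℝ)) ^ (α'-1)) :=
          (Finset.sum_image (f := fun v : Fin k → ℕ => ∏ i, (A * ((v i : ℝ)) ^ (α'-1))) hinj).symm
      _ ≤ ∑ g ∈ (Fintype.piFinset fun _ : Fin k => Icc 1 N).filter (fun g => ∑ i, g i ≤ N),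
            ∏ i, (A * ((g i : ℝ)) ^ (α'-1)) := by
          apply Finset.sum_le_sum_of_subset_of_nonneg
          · intro v hv
            rw [Finset.mem_image] at hv
            obtain ⟨I, hI, rfl⟩ := hv
            exact hmem_img I hI
          · intro g _ _
            exact Finset.prod_nonneg (fun i _ =>
              mul_nonneg hA.le (Real.rpow_nonneg (Nat.cast_nonneg _) _))
      _ = A^k * ∑ g ∈ (Fintype.piFinset fun _ : Fin k => Icc 1 N).filter
            (fun g => ∑ i, g i ≤ N), ∏ i, ((g i : ℝ)) ^ (α'-1) := by
          rw [Finset.mul_sum]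
          apply Finset.sum_congr rfl
          intro g _
          rw [Finset.prod_mul_distrib, Finset.prod_const, Finset.card_univ, Fintype.card_fin]
  -- per-k full bound
  have perk : ∀ k : ℕ, 1 ≤ k → k ≤ N →
      ∑ I ∈ powersetCard k (Icc 1 N), c^I.card * (μ {y | ∀ m ∈ I, m ∈ T y}).toReal
        ≤ 2^α' * u k := by
    intro k hk hkN
    have hcards : ∀ I ∈ powersetCard k (Icc 1 N), I.card = k :=
      fun I hI => (Finset.mem_powersetCard.mp hI).2
    have e0 : ∑ I ∈ powersetCard k (Icc 1 N), c^I.card * (μ {y | ∀ m ∈ I, m ∈ T y}).toReal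
        = c^k * ∑ I ∈ powersetCard k (Icc 1 N), (μ {y | ∀ m ∈ I, m ∈ T y}).toReal := by
      rw [Finset.mul_sum]
      exact Finset.sum_congr rfl (fun I hI => by rw [hcards I hI])
    rw [e0]
    have hWb := W_bd' hα' hα1 k N hk hN
    have hchain := chain k hk
    have hμ0 : (0:ℝ) ≤ ∑ I ∈ powersetCard k (Icc 1 N), (μ {y | ∀ m ∈ I, m ∈ T y}).toReal :=
      Finset.sum_nonneg (fun I _ => ENNReal.toReal_nonneg)
    have step : c^k * ∑ I ∈ powersetCard k (Icc 1 N), (μ {y | ∀ m ∈ I, m ∈ T y}).toReal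
        ≤ c^k * (A^k * (2^k * (1/α')^k * (N:ℝ)^(α'*k) * 2^α' * (2/(k:ℝ))^(α'*k/2))) := by
      apply mul_le_mul_of_nonneg_left _ (pow_nonneg hc0 k)
      calc ∑ I ∈ powersetCard k (Icc 1 N), (μ {y | ∀ m ∈ I, m ∈ T y}).toReal
          ≤ A^k * ∑ g ∈ (Fintype.piFinset fun _ : Fin k => Icc 1 N).filter
              (fun g => ∑ i, g i ≤ N), ∏ i, ((g i : ℝ)) ^ (α'-1) := hchain
        _ ≤ A^k * (2^k * (1/α')^k * (N:ℝ)^(α'*k) * 2^α' * (2/(k:ℝ))^(α'*k/2)) := by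
            apply mul_le_mul_of_nonneg_left hWb (pow_nonneg hA.le k)
    refine le_trans step ?_
    -- now pure algebra
    have hck : c^k ≤ (hhat * Real.exp hhat)^k * ((N:ℝ)^(-α'))^k := by
      rw [← mul_pow]
      exact pow_le_pow_left₀ hc0 hcle k
    have hNcancel : ((N:ℝ)^(-α'))^k * (N:ℝ)^(α'*k) = 1 := by
      rw [← Real.rpow_natCast ((N:ℝ)^(-α')) k, ← Real.rpow_mul hN0.le,
        ← Real.rpow_add hN0]
      rw [show -α' * (k:ℝ) + α'*(k:ℝ) = 0 by ring, Real.rpow_zero]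
    have hrhs0 : (0:ℝ) ≤ A^k * (2^k * (1/α')^k * (N:ℝ)^(α'*k) * 2^α' * (2/(k:ℝ))^(α'*k/2)) := by
      have : (0:ℝ) ≤ (2/(k:ℝ))^(α'*k/2) := Real.rpow_nonneg (by positivity) _
      have : (0:ℝ) ≤ (N:ℝ)^(α'*k) := Real.rpow_nonneg hN0.le _
      positivity
    calc c^k * (A^k * (2^k * (1/α')^k * (N:ℝ)^(α'*k) * 2^α' * (2/(k:ℝ))^(α'*k/2)))
        ≤ ((hhat * Real.exp hhat)^k * ((N:ℝ)^(-α'))^k)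
            * (A^k * (2^k * (1/α')^k * (N:ℝ)^(α'*k) * 2^α' * (2/(k:ℝ))^(α'*k/2))) :=
          mul_le_mul_of_nonneg_right hck hrhs0
      _ = ((hhat * Real.exp hhat)^k * A^k * 2^k * (1/α')^k)
            * (((N:ℝ)^(-α'))^k * (N:ℝ)^(α'*k)) * (2^α' * (2/(k:ℝ))^(α'*k/2)) := by ring
      _ = ((hhat * Real.exp hhat)^k * A^k * 2^k * (1/α')^k)
            * (2^α' * (2/(k:ℝ))^(α'*k/2)) := by rw [hNcancel, mul_one]
      _ = 2^α' * u k := by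
          have huk : u k = E^k * (2/(k:ℝ))^(α'*(k:ℝ)/2) := rfl
          rw [huk, hE]
          rw [show (2 * (hhat * Real.exp hhat) * A / α')^k
            = (hhat * Real.exp hhat)^k * A^k * 2^k * (1/α')^k by
              rw [← mul_pow, ← mul_pow, ← mul_pow]; congr 1; field_simp]
          ring
  -- assemble
  rw [hInt, Finset.sum_powerset]
  have hcard : (Icc 1 N).card = N := by simp
  rw [hcard]
  have hsplit : range (N+1) = insert 0 (Icc 1 N) := by
    ext m; simp [Nat.lt_succ_iff]; omega
  rw [hsplit, Finset.sum_insert (by simp)]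
  have hzero : ∑ I ∈ powersetCard 0 (Icc 1 N),
      c^I.card * (μ {y | ∀ m ∈ I, m ∈ T y}).toReal = 1 := by
    rw [Finset.powersetCard_zero, Finset.sum_singleton]
    have : {y : Ω | ∀ m ∈ (∅ : Finset ℕ), m ∈ T y} = Set.univ := by
      ext y; simp
    simp [this]
  rw [hzero]
  have hinner : ∑ k ∈ Icc 1 N, u k ≤ (∑ k ∈ range K, u k) + 2 := by
    rw [← Finset.sum_filter_add_sum_filter_not (Icc 1 N) (fun k => k < K)]
    have p1 : ∑ k ∈ (Icc 1 N).filter (fun k => k < K), u k ≤ ∑ k ∈ range K, u k := by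
      apply Finset.sum_le_sum_of_subset_of_nonneg
      · intro k hk
        rw [mem_filter] at hk
        rw [mem_range]
        exact hk.2
      · intro k _ _; exact hu0 k
    have p2 : ∑ k ∈ (Icc 1 N).filter (fun k => ¬ k < K), u k ≤ 2 := by
      calc ∑ k ∈ (Icc 1 N).filter (fun k => ¬ k < K), u k
          ≤ ∑ k ∈ (Icc 1 N).filter (fun k => ¬ k < K), ((1:ℝ)/2)^k := by
            apply Finset.sum_le_sum
            intro k hk
            rw [mem_filter] at hk
            exact htail k (by omega)
        _ ≤ 2 := geom_bd _
    linarith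
  have hmain : ∑ k ∈ Icc 1 N,
      (∑ I ∈ powersetCard k (Icc 1 N), c^I.card * (μ {y | ∀ m ∈ I, m ∈ T y}).toReal)
      ≤ 2^α' * ((∑ k ∈ range K, u k) + 2) := by
    have h2a : (0:ℝ) ≤ 2^α' := Real.rpow_nonneg (by norm_num) _
    calc ∑ k ∈ Icc 1 N,
        (∑ I ∈ powersetCard k (Icc 1 N), c^I.card * (μ {y | ∀ m ∈ I, m ∈ T y}).toReal)
        ≤ ∑ k ∈ Icc 1 N, 2^α' * u k := by
          apply Finset.sum_le_sum
          intro k hk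
          rw [mem_Icc] at hk
          exact perk k hk.1 hk.2
      _ = 2^α' * ∑ k ∈ Icc 1 N, u k := by rw [Finset.mul_sum]
      _ ≤ 2^α' * ((∑ k ∈ range K, u k) + 2) := mul_le_mul_of_nonneg_left hinner h2a
  linarith
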